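/- Lemma 2.1 (full statement, equal subcoset sizes): Let a text M be partitioned into m cosets each of size divisible by λ, let f_j : Fin 26 → ℕ be the letter-frequency vector of the j-th m-coset (so ∑_i f_j(i) = n_j with λ ∣ n_j, n_j > 0), and let f_{j,l}, 0 ≤ l < λ, be frequency vectors of a partition of the j-th coset into λ subcosets each of size n_j/λ (so ∑_l f_{j,l} = f_j entrywise and ∑_i f_{j,l}(i) = n_j/λ). Define the normalized twist ♦u = (U(u) − L(u))/(∑_i u(i)) ∈ ℚ for a nonzero vector u, with U, L the sums of the 13 largest resp. 13 smallest entries. Then (1/m)·∑_{j=1}^m ♦f_j ≤ (1/(λm))·∑_{j=1}^m ∑_{l=0}^{λ−1} ♦f_{j,l}. -/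
import Mathlib


/-- The sum of the 13 largest entries of `u : Fin 26 → ℕ`. -/
def upperSum (u : Fin 26 → ℕ) : ℕ :=
  ∑ i ∈ Finset.univ.filter (fun i : Fin 26 => 13 ≤ (i : ℕ)), (u ∘ Tuple.sort u) i

/-- The sum of the 13 smallest entries of `u : Fin 26 → ℕ`. -/
def lowerSum (u : Fin 26 → ℕ) : ℕ :=
  ∑ i ∈ Finset.univ.filter (fun i : Fin 26 => (i : ℕ) < 13), (u ∘ Tuple.sort u) i

/-- The normalized twist `♦u` of a frequency vector `u`, over `ℚ`. -/
def ntwist (u : Fin 26 → ℕ) : ℚ :=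
  ((upperSum u : ℚ) - (lowerSum u : ℚ)) / (∑ i, u i : ℕ)

lemma aux_sum_le_top {v : Fin 26 → ℕ} (hv : Monotone v) (T : Finset (Fin 26))
    (hT : T.card = 13) :
    ∑ i ∈ T, v i ≤ ∑ i ∈ Finset.univ.filter (fun i : Fin 26 => 13 ≤ (i : ℕ)), v i := by
  classical
  set top := Finset.univ.filter (fun i : Fin 26 => 13 ≤ (i : ℕ)) with htopdef
  have htop : top.card = 13 := by decide
  have hcard : (T \ top).card = (top \ T).card := by
    have h1 := Finset.card_sdiff_add_card_inter T top
    have h2 := Finset.card_sdiff_add_card_inter top T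
    rw [Finset.inter_comm] at h2
    omega
  have hA : ∑ i ∈ T \ top, v i ≤ (T \ top).card • v ⟨13, by norm_num⟩ := by
    apply Finset.sum_le_card_nsmul
    intro i hi
    have hi2 : ¬ (13 ≤ (i : ℕ)) := by
      have := (Finset.mem_sdiff.mp hi).2
      simpa [htopdef] using this
    exact hv (by rw [Fin.le_def]; simp; omega)
  have hB : (top \ T).card • v ⟨13, by norm_num⟩ ≤ ∑ i ∈ top \ T, v i := by
    apply Finset.card_nsmul_le_sum
    intro i hi
    have hi2 : 13 ≤ (i : ℕ) := by
      have := (Finset.mem_sdiff.mp hi).1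
      simpa [htopdef] using this
    exact hv (by rw [Fin.le_def]; simpa using hi2)
  rw [hcard] at hA
  simp only [smul_eq_mul] at hA hB
  have e1 := Finset.sum_inter_add_sum_sdiff T top v
  have e2 := Finset.sum_inter_add_sum_sdiff top T v
  rw [Finset.inter_comm] at e2
  omega

lemma aux_bot_le_sum {v : Fin 26 → ℕ} (hv : Monotone v) (T : Finset (Fin 26))
    (hT : T.card = 13) :
    ∑ i ∈ Finset.univ.filter (fun i : Fin 26 => (i : ℕ) < 13), v i ≤ ∑ i ∈ T, v i := by
  classical
  set bot := Finset.univ.filter (fun i : Fin 26 => (i : ℕ) < 13) with hbotdef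
  have hbot : bot.card = 13 := by decide
  have hcard : (bot \ T).card = (T \ bot).card := by
    have h1 := Finset.card_sdiff_add_card_inter bot T
    have h2 := Finset.card_sdiff_add_card_inter T bot
    rw [Finset.inter_comm] at h2
    omega
  have hA : ∑ i ∈ bot \ T, v i ≤ (bot \ T).card • v ⟨13, by norm_num⟩ := by
    apply Finset.sum_le_card_nsmul
    intro i hi
    have hi2 : (i : ℕ) < 13 := by
      have := (Finset.mem_sdiff.mp hi).1
      simpa [hbotdef] using this
    exact hv (by rw [Fin.le_def]; simp; omega)
  have hB : (T \ bot).card • v ⟨13, by norm_num⟩ ≤ ∑ i ∈ T \ bot, v i := by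
    apply Finset.card_nsmul_le_sum
    intro i hi
    have hi2 : ¬ ((i : ℕ) < 13) := by
      have := (Finset.mem_sdiff.mp hi).2
      simpa [hbotdef] using this
    exact hv (by rw [Fin.le_def]; simp; omega)
  rw [hcard] at hA
  simp only [smul_eq_mul] at hA hB
  have e1 := Finset.sum_inter_add_sum_sdiff bot T v
  have e2 := Finset.sum_inter_add_sum_sdiff T bot v
  rw [Finset.inter_comm] at e2
  omega

lemma sum_le_upperSum (u : Fin 26 → ℕ) (T : Finset (Fin 26)) (hT : T.card = 13) :
    ∑ i ∈ T, u i ≤ upperSum u := by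
  classical
  set σ := Tuple.sort u with hσ
  have hmono : Monotone (u ∘ σ) := Tuple.monotone_sort u
  have himg : ∑ j ∈ T.image σ.symm, (u ∘ σ) j = ∑ i ∈ T, u i := by
    rw [Finset.sum_image (fun a _ b _ h => σ.symm.injective h)]
    simp
  have hcard : (T.image σ.symm).card = 13 := by
    rw [Finset.card_image_of_injective _ σ.symm.injective, hT]
  rw [← himg]
  exact aux_sum_le_top hmono _ hcard

lemma lowerSum_le_sum (u : Fin 26 → ℕ) (T : Finset (Fin 26)) (hT : T.card = 13) :
    lowerSum u ≤ ∑ i ∈ T, u i := by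
  classical
  set σ := Tuple.sort u with hσ
  have hmono : Monotone (u ∘ σ) := Tuple.monotone_sort u
  have himg : ∑ j ∈ T.image σ.symm, (u ∘ σ) j = ∑ i ∈ T, u i := by
    rw [Finset.sum_image (fun a _ b _ h => σ.symm.injective h)]
    simp
  have hcard : (T.image σ.symm).card = 13 := by
    rw [Finset.card_image_of_injective _ σ.symm.injective, hT]
  rw [← himg]
  exact aux_bot_le_sum hmono _ hcard

lemma exists_upper_witness (u : Fin 26 → ℕ) :
    ∃ T : Finset (Fin 26), T.card = 13 ∧ upperSum u = ∑ i ∈ T, u i := by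
  classical
  set σ := Tuple.sort u with hσ
  refine ⟨(Finset.univ.filter (fun i : Fin 26 => 13 ≤ (i : ℕ))).image σ, ?_, ?_⟩
  · rw [Finset.card_image_of_injective _ σ.injective]; decide
  · rw [Finset.sum_image (fun a _ b _ h => σ.injective h)]
    rfl

lemma exists_lower_witness (u : Fin 26 → ℕ) :
    ∃ T : Finset (Fin 26), T.card = 13 ∧ lowerSum u = ∑ i ∈ T, u i := by
  classical
  set σ := Tuple.sort u with hσ
  refine ⟨(Finset.univ.filter (fun i : Fin 26 => (i : ℕ) < 13)).image σ, ?_, ?_⟩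
  · rw [Finset.card_image_of_injective _ σ.injective]; decide
  · rw [Finset.sum_image (fun a _ b _ h => σ.injective h)]
    rfl

/-- Lemma 2.1 (equal subcoset sizes): if each coset frequency vector `f j`
(of total size `n j > 0` divisible by `lam`) splits as an entrywise sum of
`lam` subcoset frequency vectors `g j l`, each of total size `n j / lam`, then
the average normalized twist over the `m` cosets is at most the average
normalized twist over the `lam * m` subcosets. -/
theorem twist_index_le_of_refinement (m lam : ℕ) (hm : 0 < m) (hlam : 0 < lam)
    (f : Fin m → Fin 26 → ℕ) (g : Fin m → Fin lam → Fin 26 → ℕ)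
    (n : Fin m → ℕ) (hn : ∀ j, ∑ i, f j i = n j)
    (hnpos : ∀ j, 0 < n j) (hdvd : ∀ j, lam ∣ n j)
    (hsplit : ∀ j i, f j i = ∑ l, g j l i)
    (hsize : ∀ j l, ∑ i, g j l i = n j / lam) :
    (1 / (m : ℚ)) * ∑ j, ntwist (f j) ≤
      (1 / ((lam : ℚ) * m)) * ∑ j, ∑ l, ntwist (g j l) := by
  have key : ∀ j, ntwist (f j) ≤ (1 / (lam : ℚ)) * ∑ l, ntwist (g j l) := by
    intro j
    set k := n j / lam with hkdef
    have hk : 0 < k := Nat.div_pos (Nat.le_of_dvd (hnpos j) (hdvd j)) hlam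
    have hkl : lam * k = n j := Nat.mul_div_cancel' (hdvd j)
    -- upper sum subadditivity
    obtain ⟨T, hTcard, hTeq⟩ := exists_upper_witness (f j)
    have hU : upperSum (f j) ≤ ∑ l, upperSum (g j l) := by
      calc upperSum (f j) = ∑ i ∈ T, f j i := hTeq
        _ = ∑ i ∈ T, ∑ l, g j l i := by
            exact Finset.sum_congr rfl fun i _ => hsplit j i
        _ = ∑ l, ∑ i ∈ T, g j l i := Finset.sum_comm
        _ ≤ ∑ l, upperSum (g j l) :=
            Finset.sum_le_sum fun l _ => sum_le_upperSum (g j l) T hTcard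
    obtain ⟨T', hTcard', hTeq'⟩ := exists_lower_witness (f j)
    have hL : ∑ l, lowerSum (g j l) ≤ lowerSum (f j) := by
      calc ∑ l, lowerSum (g j l) ≤ ∑ l, ∑ i ∈ T', g j l i :=
            Finset.sum_le_sum fun l _ => lowerSum_le_sum (g j l) T' hTcard'
        _ = ∑ i ∈ T', ∑ l, g j l i := Finset.sum_comm
        _ = ∑ i ∈ T', f j i := by
            exact Finset.sum_congr rfl fun i _ => (hsplit j i).symm
        _ = lowerSum (f j) := hTeq'.symm
    have hgl : ∀ l, ntwist (g j l)
        = ((upperSum (g j l) : ℚ) - (lowerSum (g j l) : ℚ)) / (k : ℚ) := by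
      intro l
      rw [ntwist, hsize j l]
    rw [ntwist, hn j, Finset.sum_congr rfl (fun l _ => hgl l), ← Finset.sum_div,
      Finset.sum_sub_distrib]
    have hkQ : (0 : ℚ) < (k : ℚ) := by exact_mod_cast hk
    have hlamQ : (0 : ℚ) < (lam : ℚ) := by exact_mod_cast hlam
    have hnQ : (0 : ℚ) < ((n j : ℕ) : ℚ) := by exact_mod_cast hnpos j
    have hrw : (1 / (lam : ℚ)) *
        (((∑ l, (upperSum (g j l) : ℚ)) - ∑ l, (lowerSum (g j l) : ℚ)) / (k : ℚ))
        = ((∑ l, (upperSum (g j l) : ℚ)) - ∑ l, (lowerSum (g j l) : ℚ)) / ((n j : ℕ) : ℚ) := by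
      rw [← hkl]
      push_cast
      field_simp
    rw [hrw]
    have hUQ : (upperSum (f j) : ℚ) ≤ ∑ l, (upperSum (g j l) : ℚ) := by
      exact_mod_cast hU
    have hLQ : ∑ l, (lowerSum (g j l) : ℚ) ≤ (lowerSum (f j) : ℚ) := by
      exact_mod_cast hL
    gcongr
  calc (1 / (m : ℚ)) * ∑ j, ntwist (f j)
      ≤ (1 / (m : ℚ)) * ∑ j, (1 / (lam : ℚ)) * ∑ l, ntwist (g j l) := by
        apply mul_le_mul_of_nonneg_left (Finset.sum_le_sum fun j _ => key j)
        positivity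
    _ = (1 / ((lam : ℚ) * m)) * ∑ j, ∑ l, ntwist (g j l) := by
        rw [← Finset.mul_sum]
        ring
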